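/- If E is an infinite-dimensional Banach space and 1 ≤ p < ∞, then ℓ_p(E) is not closed in ℓ_p^w(E) with respect to the weak ℓ_p norm. -/

import Mathlib

open Filter

noncomputable section

section Defs

variable {E : Type*}

/-- `x ∈ ℓ_p(E)`: absolutely `p`-summable sequences. -/
def MemLpSeq [NormedAddCommGroup E] (p : ℝ) (x : ℕ → E) : Prop :=
  Summable fun j => ‖x j‖ ^ p

/-- The `ℓ_p` norm `(Σ ‖x j‖^p)^(1/p)`. -/
def lpNorm [NormedAddCommGroup E] (p : ℝ) (x : ℕ → E) : ℝ :=
  (∑' j, ‖x j‖ ^ p) ^ (1 / p)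

/-- `x ∈ ℓ_p^w(E)`: weakly `p`-summable sequences. -/
def WSummable [NormedAddCommGroup E] [NormedSpace ℝ E] (p : ℝ) (x : ℕ → E) : Prop :=
  ∀ f : E →L[ℝ] ℝ, Summable fun j => |f (x j)| ^ p

/-- The weak `ℓ_p` norm `sup_{‖f‖ ≤ 1} (Σ |f (x j)|^p)^(1/p)`. -/
def wNorm [NormedAddCommGroup E] [NormedSpace ℝ E] (p : ℝ) (x : ℕ → E) : ℝ :=
  ⨆ f : {f : E →L[ℝ] ℝ // ‖f‖ ≤ 1}, (∑' j, |f.1 (x j)| ^ p) ^ (1 / p)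

/-- `x ∈ ℓ_p^{mid}(E)`: mid `p`-summable sequences. -/
def MidSummable [NormedAddCommGroup E] [NormedSpace ℝ E] (p : ℝ) (x : ℕ → E) : Prop :=
  WSummable p x ∧ ∀ xs : ℕ → E →L[ℝ] ℝ, WSummable p xs →
    Summable fun nj : ℕ × ℕ => |xs nj.1 (x nj.2)| ^ p

/-- The mid `ℓ_p` norm: sup over the unit ball of `ℓ_p^w(E*)` of the double `ℓ_p` sum. -/
def midNorm [NormedAddCommGroup E] [NormedSpace ℝ E] (p : ℝ) (x : ℕ → E) : ℝ :=
  ⨆ xs : {xs : ℕ → E →L[ℝ] ℝ // WSummable p xs ∧ wNorm p xs ≤ 1},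
    (∑' nj : ℕ × ℕ, |xs.1 nj.1 (x nj.2)| ^ p) ^ (1 / p)

/-- `x ∈ ℓ_p^u(E)`: unconditionally `p`-summable sequences (weak norms of tails tend to 0). -/
def USummable [NormedAddCommGroup E] [NormedSpace ℝ E] (p : ℝ) (x : ℕ → E) : Prop :=
  WSummable p x ∧ Tendsto (fun k => wNorm p fun j => x (j + k)) atTop (nhds 0)

/-- `x ∈ c₀₀(E)`: finitely supported sequences. -/
def FinSupp [Zero E] (x : ℕ → E) : Prop := ∃ N, ∀ j ≥ N, x j = 0

/-- Truncation of a sequence at index `k`. -/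
def trunc [Zero E] (k : ℕ) (x : ℕ → E) : ℕ → E := fun j => if j < k then x j else 0

end Defs

section Aux

open Module

variable {E : Type*} [NormedAddCommGroup E] [NormedSpace ℝ E]

theorem aux_exists_J (N : ℕ) (v : Fin N → E) (hv : LinearIndependent ℝ v) :
    ∃ J : EuclideanSpace ℝ (Fin N) →L[ℝ] E, Function.Injective J := by
  let l : EuclideanSpace ℝ (Fin N) →ₗ[ℝ] E :=
    { toFun := fun u => ∑ i, u i • v i
      map_add' := by intro a b; simp [add_smul, Finset.sum_add_distrib]
      map_smul' := by intro c a; simp [smul_smul, Finset.smul_sum]}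
  refine ⟨l.toContinuousLinearMap, ?_⟩
  have : Function.Injective l := by
    rw [← LinearMap.ker_eq_bot, Submodule.eq_bot_iff]
    intro u hu
    have h := (Fintype.linearIndependent_iff.mp hv) u (by simpa [l] using hu)
    ext i
    simpa using h i
  simpa using this

theorem exists_c0 (N : ℕ) (hN : 0 < N) (J : EuclideanSpace ℝ (Fin N) →L[ℝ] E)
    (hJ : Function.Injective J) :
    ∃ c : ℝ, 0 < c ∧ ∀ u, c * ‖u‖ ≤ ‖J u‖ := by
  haveI : Nonempty (Fin N) := ⟨⟨0, hN⟩⟩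
  haveI : Nontrivial (EuclideanSpace ℝ (Fin N)) := by
    refine ⟨EuclideanSpace.single ⟨0, hN⟩ 1, 0, ?_⟩
    simp only [ne_eq]
    intro h
    have := congrArg (fun v : EuclideanSpace ℝ (Fin N) => v ⟨0, hN⟩) h
    simp [EuclideanSpace.single] at this
  have hs : IsCompact (Metric.sphere (0 : EuclideanSpace ℝ (Fin N)) 1) := isCompact_sphere _ _
  have hne : (Metric.sphere (0 : EuclideanSpace ℝ (Fin N)) 1).Nonempty := by
    apply NormedSpace.sphere_nonempty.mpr; norm_num
  obtain ⟨u₀, hu₀, hmin⟩ := hs.exists_isMinOn hne ((continuous_norm.comp J.continuous).continuousOn)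
  have hu₀n : ‖u₀‖ = 1 := by simpa using hu₀
  refine ⟨‖J u₀‖, ?_, ?_⟩
  · rcases (norm_nonneg (J u₀)).lt_or_eq with h | h
    · exact h
    · exfalso
      have h0 : J u₀ = 0 := by rw [← norm_eq_zero]; linarith
      have : u₀ = 0 := hJ (by simpa using h0)
      rw [this] at hu₀n; simp at hu₀n
  · intro u
    rcases eq_or_ne u 0 with rfl | hu
    · simp
    · have h1 : (‖u‖⁻¹ • u) ∈ Metric.sphere (0 : EuclideanSpace ℝ (Fin N)) 1 := by
        simp only [Metric.mem_sphere, dist_zero_right, norm_smul, norm_inv, norm_norm]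
        exact inv_mul_cancel₀ (norm_ne_zero_iff.mpr hu)
      have h2 : ‖J u₀‖ ≤ ‖J (‖u‖⁻¹ • u)‖ := hmin h1
      simp only [map_smul, norm_smul, norm_inv, norm_norm] at h2
      have hupos : 0 < ‖u‖ := norm_pos_iff.mpr hu
      calc ‖J u₀‖ * ‖u‖ ≤ (‖u‖⁻¹ * ‖J u‖) * ‖u‖ :=
            mul_le_mul_of_nonneg_right h2 (norm_nonneg u)
        _ = ‖J u‖ := by field_simp

theorem exists_max (N : ℕ) (hN : 0 < N) (J : EuclideanSpace ℝ (Fin N) →L[ℝ] E)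
    (c : ℝ) (hc : 0 < c) (hcJ : ∀ u, c * ‖u‖ ≤ ‖J u‖) :
    ∃ T : EuclideanSpace ℝ (Fin N) →L[ℝ] EuclideanSpace ℝ (Fin N),
      (∀ u, ‖J (T u)‖ ≤ ‖u‖) ∧ 0 < |LinearMap.det (T : EuclideanSpace ℝ (Fin N) →ₗ[ℝ] EuclideanSpace ℝ (Fin N))| ∧
      ∀ T' : EuclideanSpace ℝ (Fin N) →L[ℝ] EuclideanSpace ℝ (Fin N), (∀ u, ‖J (T' u)‖ ≤ ‖u‖) →
        |LinearMap.det (T' : EuclideanSpace ℝ (Fin N) →ₗ[ℝ] EuclideanSpace ℝ (Fin N))| ≤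
        |LinearMap.det (T : EuclideanSpace ℝ (Fin N) →ₗ[ℝ] EuclideanSpace ℝ (Fin N))| := by
  set H := EuclideanSpace ℝ (Fin N) with hH
  set K : Set (H →L[ℝ] H) := {T | ∀ u, ‖J (T u)‖ ≤ ‖u‖} with hK
  -- continuity of det
  have hdet : Continuous (fun T : H →L[ℝ] H => |LinearMap.det (T : H →ₗ[ℝ] H)|) := by
    set b : Basis (Fin N) ℝ H := (EuclideanSpace.basisFun (Fin N) ℝ).toBasis with hb
    have h : ∀ T : H →L[ℝ] H, LinearMap.det (T : H →ₗ[ℝ] H) =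
        Matrix.det (LinearMap.toMatrix b b (T : H →ₗ[ℝ] H)) := fun T => (LinearMap.det_toMatrix b _).symm
    simp_rw [h]
    refine continuous_abs.comp (Continuous.matrix_det (continuous_matrix fun i j => ?_))
    have h1 : Continuous (fun T : H →L[ℝ] H => T (b j)) :=
      (ContinuousLinearMap.apply ℝ H (b j)).continuous
    have h2 : ∀ T : H →L[ℝ] H, LinearMap.toMatrix b b (T : H →ₗ[ℝ] H) i j = (T (b j)) i := by
      intro T
      rw [LinearMap.toMatrix_apply]
      simp only [b, OrthonormalBasis.coe_toBasis_repr_apply, OrthonormalBasis.coe_toBasis]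
      rfl
    simp_rw [h2]
    exact (continuous_apply i).comp ((PiLp.continuous_ofLp 2 _).comp h1)
  -- K compact
  have hKc : IsCompact K := by
    have hclosed : IsClosed K := by
      have : K = ⋂ u, {T : H →L[ℝ] H | ‖J (T u)‖ ≤ ‖u‖} := by
        ext T; simp [hK, Set.mem_iInter]
      rw [this]
      refine isClosed_iInter fun u => isClosed_le ?_ continuous_const
      exact (continuous_norm.comp (J.continuous.comp
        (ContinuousLinearMap.apply ℝ H u).continuous))
    have hbdd : Bornology.IsBounded K := by
      rw [Metric.isBounded_iff_subset_closedBall 0]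
      refine ⟨c⁻¹, fun T hT => ?_⟩
      simp only [Metric.mem_closedBall, dist_zero_right]
      refine ContinuousLinearMap.opNorm_le_bound T (by positivity) fun u => ?_
      have h1 := hcJ (T u)
      have h2 := hT u
      rw [inv_mul_eq_div, le_div_iff₀ hc, mul_comm]
      exact le_trans h1 h2
    exact Metric.isCompact_of_isClosed_isBounded hclosed hbdd
  have hKne : ((‖J‖ + 1)⁻¹ • (ContinuousLinearMap.id ℝ H)) ∈ K := by
    intro u
    simp only [ContinuousLinearMap.smul_apply, ContinuousLinearMap.id_apply, map_smul, norm_smul]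
    have h1 : ‖J u‖ ≤ ‖J‖ * ‖u‖ := J.le_opNorm u
    have h2 : 0 < ‖J‖ + 1 := by positivity
    have h3 : (0:ℝ) ≤ ‖J‖ := norm_nonneg _
    calc |(‖J‖ + 1)⁻¹| * ‖J u‖ ≤ (‖J‖+1)⁻¹ * (‖J‖ * ‖u‖) := by
          rw [abs_of_pos (by positivity)]
          exact mul_le_mul_of_nonneg_left h1 (by positivity)
      _ ≤ 1 * ‖u‖ := by
          rw [← mul_assoc]
          apply mul_le_mul_of_nonneg_right _ (norm_nonneg u)
          rw [inv_mul_eq_div, div_le_one h2]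
          linarith
      _ = ‖u‖ := one_mul _
  obtain ⟨T, hTK, hmax⟩ := hKc.exists_isMaxOn ⟨_, hKne⟩ hdet.continuousOn
  refine ⟨T, hTK, ?_, fun T' hT' => hmax hT'⟩
  have h0 := hmax hKne
  have hdet0 : |LinearMap.det ((((‖J‖ + 1)⁻¹) • (ContinuousLinearMap.id ℝ H) : H →L[ℝ] H) : H →ₗ[ℝ] H)| = ((‖J‖+1)⁻¹)^N := by
    have : ((((‖J‖ + 1)⁻¹) • (ContinuousLinearMap.id ℝ H) : H →L[ℝ] H) : H →ₗ[ℝ] H)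
        = ((‖J‖ + 1)⁻¹) • (LinearMap.id : H →ₗ[ℝ] H) := by
      ext u; simp
    rw [this, LinearMap.det_smul, LinearMap.det_id, mul_one]
    have hfr : finrank ℝ H = N := finrank_euclideanSpace_fin
    rw [hfr, abs_pow, abs_of_pos (by positivity)]
  calc (0:ℝ) < ((‖J‖+1)⁻¹)^N := by positivity
    _ = _ := hdet0.symm
    _ ≤ _ := h0

theorem det_id_add_proj (N : ℕ) (V : Submodule ℝ (EuclideanSpace ℝ (Fin N))) :
    LinearMap.det (((ContinuousLinearMap.id ℝ (EuclideanSpace ℝ (Fin N)) +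
      V.subtypeL.comp V.orthogonalProjectionOnto) :
      EuclideanSpace ℝ (Fin N) →L[ℝ] EuclideanSpace ℝ (Fin N)) :
      EuclideanSpace ℝ (Fin N) →ₗ[ℝ] EuclideanSpace ℝ (Fin N)) = 2 ^ (finrank ℝ V) := by
  set H := EuclideanSpace ℝ (Fin N)
  set D : H →L[ℝ] H := ContinuousLinearMap.id ℝ H + V.subtypeL.comp V.orthogonalProjectionOnto with hD
  have hcompl : IsCompl V Vᗮ := Submodule.isCompl_orthogonal_of_hasOrthogonalProjection
  set bV := finBasis ℝ V
  set bW := finBasis ℝ Vᗮ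
  set e := Submodule.prodEquivOfIsCompl V Vᗮ hcompl
  set bb : Basis (Fin (finrank ℝ V) ⊕ Fin (finrank ℝ Vᗮ)) ℝ H := (bV.prod bW).map e with hbb
  classical
  set c : (Fin (finrank ℝ V) ⊕ Fin (finrank ℝ Vᗮ)) → ℝ := Sum.elim (fun _ => (2:ℝ)) (fun _ => 1) with hc
  have hbbl : ∀ i, bb (Sum.inl i) = (bV i : H) := by
    intro i
    simp only [hbb, Basis.map_apply]
    have : (bV.prod bW) (Sum.inl i) = ((bV i : V), (0 : Vᗮ)) := by
      ext
      · rw [Basis.prod_apply_inl_fst]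
      · rw [Basis.prod_apply_inl_snd]
    rw [this, Submodule.coe_prodEquivOfIsCompl']
    simp
  have hbbr : ∀ i, bb (Sum.inr i) = (bW i : H) := by
    intro i
    simp only [hbb, Basis.map_apply]
    have : (bV.prod bW) (Sum.inr i) = ((0 : V), (bW i : Vᗮ)) := by
      ext
      · rw [Basis.prod_apply_inr_fst]
      · rw [Basis.prod_apply_inr_snd]
    rw [this, Submodule.coe_prodEquivOfIsCompl']
    simp
  have hDapp : ∀ k, D (bb k) = c k • bb k := by
    intro k
    rcases k with i | i
    · rw [hbbl i]
      simp only [hD, ContinuousLinearMap.add_apply, ContinuousLinearMap.id_apply,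
        ContinuousLinearMap.comp_apply, Submodule.subtypeL_apply]
      rw [Submodule.orthogonalProjectionOnto_mem_subspace_eq_self (bV i)]
      simp [hc, two_smul]
    · rw [hbbr i]
      simp only [hD, ContinuousLinearMap.add_apply, ContinuousLinearMap.id_apply,
        ContinuousLinearMap.comp_apply, Submodule.subtypeL_apply]
      rw [Submodule.orthogonalProjectionOnto_apply_of_mem_orthogonal (bW i).2]
      simp [hc]
  have hmat : LinearMap.toMatrix bb bb (D : H →ₗ[ℝ] H) = Matrix.diagonal c := by
    ext i k
    rw [LinearMap.toMatrix_apply]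
    simp only [ContinuousLinearMap.coe_coe]
    rw [hDapp k, map_smul, Basis.repr_self]
    rw [Matrix.diagonal]
    simp only [Finsupp.smul_single, smul_eq_mul, mul_one, Matrix.of_apply]
    rw [Finsupp.single_apply]
    by_cases h : k = i
    · simp [h]
    · rw [if_neg (fun hh : i = k => h hh.symm)]
      simp [Finsupp.single_apply, Ne.symm h, h]
  rw [← LinearMap.det_toMatrix bb, hmat, Matrix.det_diagonal]
  rw [Fintype.prod_sum_type]
  simp [hc]

theorem claimA (n : ℕ) (hn : 0 < n) (J : EuclideanSpace ℝ (Fin (2*n)) →L[ℝ] E)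
    (T : EuclideanSpace ℝ (Fin (2*n)) →L[ℝ] EuclideanSpace ℝ (Fin (2*n)))
    (hT : ∀ u, ‖J (T u)‖ ≤ ‖u‖)
    (hdet : 0 < |LinearMap.det (T : EuclideanSpace ℝ (Fin (2*n)) →ₗ[ℝ] EuclideanSpace ℝ (Fin (2*n)))|)
    (hmax : ∀ T' : EuclideanSpace ℝ (Fin (2*n)) →L[ℝ] EuclideanSpace ℝ (Fin (2*n)),
      (∀ u, ‖J (T' u)‖ ≤ ‖u‖) →
      |LinearMap.det (T' : EuclideanSpace ℝ (Fin (2*n)) →ₗ[ℝ] EuclideanSpace ℝ (Fin (2*n)))| ≤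
      |LinearMap.det (T : EuclideanSpace ℝ (Fin (2*n)) →ₗ[ℝ] EuclideanSpace ℝ (Fin (2*n)))|)
    (V : Submodule ℝ (EuclideanSpace ℝ (Fin (2*n)))) (hV : n + 1 ≤ finrank ℝ V) :
    ∃ w, w ∈ V ∧ ‖w‖ = 1 ∧ (2/5 : ℝ) ≤ ‖J (T w)‖ := by
  set H := EuclideanSpace ℝ (Fin (2*n)) with hH
  by_contra hcon
  push_neg at hcon
  have small : ∀ w ∈ V, ‖J (T w)‖ ≤ (2/5) * ‖w‖ := by
    intro w hw
    rcases eq_or_ne w 0 with rfl | hw0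
    · simp
    · have hnorm : 0 < ‖w‖ := norm_pos_iff.mpr hw0
      have h1 : (‖w‖⁻¹ • w) ∈ V := V.smul_mem _ hw
      have h2 : ‖(‖w‖⁻¹ • w)‖ = 1 := by
        rw [norm_smul, norm_inv, norm_norm, inv_mul_cancel₀ hnorm.ne']
      have h3 := (hcon _ h1 h2).le
      rw [map_smul, map_smul, norm_smul, norm_inv, norm_norm] at h3
      calc ‖J (T w)‖ = ‖w‖ * (‖w‖⁻¹ * ‖J (T w)‖) := by field_simp
        _ ≤ ‖w‖ * (2/5) := mul_le_mul_of_nonneg_left h3 (norm_nonneg w)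
        _ = (2/5) * ‖w‖ := mul_comm _ _
  set P : H →L[ℝ] H := V.subtypeL.comp V.orthogonalProjectionOnto with hP
  set D : H →L[ℝ] H := ContinuousLinearMap.id ℝ H + P with hD
  set T' : H →L[ℝ] H := ((7:ℝ)/5)⁻¹ • (T.comp D) with hT'
  have hPnorm : ∀ u, ‖P u‖ ≤ ‖u‖ := by
    intro u
    calc ‖P u‖ ≤ ‖V.orthogonalProjectionOnto‖ * ‖u‖ := by
          have := V.orthogonalProjectionOnto.le_opNorm u
          simpa [hP] using this
      _ ≤ 1 * ‖u‖ := mul_le_mul_of_nonneg_right (Submodule.orthogonalProjectionOnto_norm_le V) (norm_nonneg u)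
      _ = ‖u‖ := one_mul _
  have hPV : ∀ u, P u ∈ V := fun u => (V.orthogonalProjectionOnto u).2
  have hT'K : ∀ u, ‖J (T' u)‖ ≤ ‖u‖ := by
    intro u
    have hDu : D u = u + P u := rfl
    have : ‖J (T (D u))‖ ≤ (7/5) * ‖u‖ := by
      rw [hDu]
      have : T (u + P u) = T u + T (P u) := map_add T u (P u)
      rw [this, map_add]
      calc ‖J (T u) + J (T (P u))‖ ≤ ‖J (T u)‖ + ‖J (T (P u))‖ := norm_add_le _ _
        _ ≤ ‖u‖ + (2/5) * ‖P u‖ := add_le_add (hT u) (small _ (hPV u))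
        _ ≤ ‖u‖ + (2/5) * ‖u‖ := by
            have := hPnorm u
            nlinarith [hPnorm u]
        _ = (7/5) * ‖u‖ := by ring
    have e1 : J (T' u) = ((7:ℝ)/5)⁻¹ • J (T (D u)) := by
      rw [hT']
      simp only [ContinuousLinearMap.smul_apply, ContinuousLinearMap.coe_comp',
        Function.comp_apply, map_smul]
    calc ‖J (T' u)‖ = |((7:ℝ)/5)⁻¹| * ‖J (T (D u))‖ := by
          rw [e1, norm_smul, Real.norm_eq_abs]
      _ ≤ ((7:ℝ)/5)⁻¹ * ((7/5) * ‖u‖) := by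
          rw [abs_of_pos (by norm_num)]
          exact mul_le_mul_of_nonneg_left this (by norm_num)
      _ = ‖u‖ := by ring
  have hdet' : |LinearMap.det (T' : H →ₗ[ℝ] H)| =
      (((7:ℝ)/5)⁻¹)^(2*n) * 2^(finrank ℝ V) * |LinearMap.det (T : H →ₗ[ℝ] H)| := by
    have h1 : (T' : H →ₗ[ℝ] H) = ((7:ℝ)/5)⁻¹ • ((T : H →ₗ[ℝ] H).comp (D : H →ₗ[ℝ] H)) := by
      ext u
      simp only [hT', ContinuousLinearMap.coe_coe, ContinuousLinearMap.smul_apply,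
        ContinuousLinearMap.coe_comp', Function.comp_apply, LinearMap.smul_apply,
        LinearMap.coe_comp, ContinuousLinearMap.coe_coe]
    rw [h1, LinearMap.det_smul, LinearMap.det_comp]
    have hfr : finrank ℝ H = 2*n := finrank_euclideanSpace_fin
    rw [hfr, det_id_add_proj]
    rw [abs_mul, abs_mul, abs_pow, abs_pow]
    rw [abs_of_pos (by norm_num : (0:ℝ) < ((7:ℝ)/5)⁻¹), abs_of_pos (by norm_num : (0:ℝ) < (2:ℝ))]
    ring
  have hgt : |LinearMap.det (T' : H →ₗ[ℝ] H)| > |LinearMap.det (T : H →ₗ[ℝ] H)| := by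
    rw [hdet']
    have key : (((7:ℝ)/5)⁻¹)^(2*n) * 2^(finrank ℝ V) > 1 := by
      have h2 : (2:ℝ)^(finrank ℝ V) ≥ 2^(n+1) := by
        apply pow_le_pow_right₀ (by norm_num) hV
      have h3 : (((7:ℝ)/5)⁻¹)^(2*n) = (((49:ℝ)/25)⁻¹)^n := by
        have h4 : (((7:ℝ)/5)⁻¹)^2 = ((49:ℝ)/25)⁻¹ := by norm_num
        rw [pow_mul, h4]
      rw [h3]
      have ha : (((49:ℝ)/25)⁻¹)^n * 2^(n+1) = 2 * ((50:ℝ)/49)^n := by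
        rw [pow_succ, ← mul_assoc, ← mul_pow]
        norm_num
        ring
      have hb : (1:ℝ) ≤ ((50:ℝ)/49)^n := one_le_pow₀ (by norm_num)
      calc (1:ℝ) < 2 * 1 := by norm_num
        _ ≤ 2 * ((50:ℝ)/49)^n := by nlinarith
        _ = (((49:ℝ)/25)⁻¹)^n * 2^(n+1) := ha.symm
        _ ≤ (((49:ℝ)/25)⁻¹)^n * 2^(finrank ℝ V) := by
            apply mul_le_mul_of_nonneg_left h2 (by positivity)
    nlinarith [hdet, key]
  exact absurd (hmax T' hT'K) (not_le.mpr hgt)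

theorem greedy (n : ℕ) (hn : 0 < n) (J : EuclideanSpace ℝ (Fin (2*n)) →L[ℝ] E)
    (T : EuclideanSpace ℝ (Fin (2*n)) →L[ℝ] EuclideanSpace ℝ (Fin (2*n)))
    (hT : ∀ u, ‖J (T u)‖ ≤ ‖u‖)
    (hdet : 0 < |LinearMap.det (T : EuclideanSpace ℝ (Fin (2*n)) →ₗ[ℝ] EuclideanSpace ℝ (Fin (2*n)))|)
    (hmax : ∀ T' : EuclideanSpace ℝ (Fin (2*n)) →L[ℝ] EuclideanSpace ℝ (Fin (2*n)),
      (∀ u, ‖J (T' u)‖ ≤ ‖u‖) →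
      |LinearMap.det (T' : EuclideanSpace ℝ (Fin (2*n)) →ₗ[ℝ] EuclideanSpace ℝ (Fin (2*n)))| ≤
      |LinearMap.det (T : EuclideanSpace ℝ (Fin (2*n)) →ₗ[ℝ] EuclideanSpace ℝ (Fin (2*n)))|) :
    ∀ k : ℕ, k ≤ n → ∃ u : Fin k → EuclideanSpace ℝ (Fin (2*n)),
      Orthonormal ℝ u ∧ ∀ i, (2/5 : ℝ) ≤ ‖J (T (u i))‖ := by
  intro k
  induction k with
  | zero =>
    intro _
    exact ⟨Fin.elim0, ⟨fun i => i.elim0, fun {i j} _ => i.elim0⟩, fun i => i.elim0⟩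
  | succ k ih =>
    intro hk
    obtain ⟨u, hu, hub⟩ := ih (le_trans (Nat.le_succ k) hk)
    set S := Submodule.span ℝ (Set.range u) with hS
    have hfrS : finrank ℝ S = k := by
      rw [hS, finrank_span_eq_card hu.linearIndependent, Fintype.card_fin]
    have hfrV : n + 1 ≤ finrank ℝ Sᗮ := by
      have h1 := Submodule.finrank_add_finrank_orthogonal S
      rw [hfrS] at h1
      have h2 : finrank ℝ (EuclideanSpace ℝ (Fin (2*n))) = 2*n := finrank_euclideanSpace_fin
      omega
    obtain ⟨w, hwV, hw1, hwb⟩ := claimA n hn J T hT hdet hmax Sᗮ hfrV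
    refine ⟨Fin.snoc u w, ⟨?_, ?_⟩, ?_⟩
    · intro i
      refine Fin.lastCases ?_ ?_ i
      · rw [Fin.snoc_last]; exact hw1
      · intro i'; rw [Fin.snoc_castSucc]; exact hu.1 i'
    · intro i j hij
      have key : ∀ i' : Fin k, (inner ℝ (u i') w : ℝ) = 0 := by
        intro i'
        exact (Submodule.mem_orthogonal S w).mp hwV _ (Submodule.subset_span ⟨i', rfl⟩)
      induction i using Fin.lastCases with
      | last =>
        induction j using Fin.lastCases with
        | last => exact absurd rfl hij
        | cast j' =>
          rw [Fin.snoc_last, Fin.snoc_castSucc, real_inner_comm]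
          exact key j'
      | cast i' =>
        induction j using Fin.lastCases with
        | last =>
          rw [Fin.snoc_last, Fin.snoc_castSucc]
          exact key i'
        | cast j' =>
          rw [Fin.snoc_castSucc, Fin.snoc_castSucc]
          apply hu.2
          intro h; apply hij; rw [h]
    · intro i
      refine Fin.lastCases ?_ ?_ i
      · rw [Fin.snoc_last]; exact hwb
      · intro i'; rw [Fin.snoc_castSucc]; exact hub i'

theorem dr_main (n : ℕ) (hn : 0 < n)
    (J : EuclideanSpace ℝ (Fin (2*n)) →L[ℝ] E)
    (T : EuclideanSpace ℝ (Fin (2*n)) →L[ℝ] EuclideanSpace ℝ (Fin (2*n)))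
    (hT : ∀ u, ‖J (T u)‖ ≤ ‖u‖)
    (u : Fin n → EuclideanSpace ℝ (Fin (2*n)))
    (hu : Orthonormal ℝ u) (hub : ∀ i, (2/5 : ℝ) ≤ ‖J (T (u i))‖) :
    ∃ y : Fin n → E, (∀ i, (2/5:ℝ) ≤ ‖y i‖ ∧ ‖y i‖ ≤ 1) ∧
      ∀ f : E →L[ℝ] ℝ, ‖f‖ ≤ 1 → (∑ i, (f (y i))^2) ≤ 1 := by
  refine ⟨fun i => J (T (u i)), fun i => ⟨hub i, ?_⟩, ?_⟩
  · calc ‖J (T (u i))‖ ≤ ‖u i‖ := hT _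
      _ = 1 := hu.1 i
  · intro f hf
    set a : Fin n → ℝ := fun i => f (J (T (u i))) with ha
    set s : ℝ := ∑ i, (a i)^2 with hs
    have hs0 : 0 ≤ s := Finset.sum_nonneg fun i _ => sq_nonneg _
    set z : EuclideanSpace ℝ (Fin (2*n)) := ∑ i, a i • u i with hz
    have hzn : ‖z‖ = Real.sqrt s := by
      have h1 : (inner ℝ z z : ℝ) = ∑ i, a i * a i := by
        rw [hz]
        have := hu.inner_sum a a Finset.univ
        simpa using this
      have h2 : ‖z‖^2 = s := by
        rw [← real_inner_self_eq_norm_sq, h1, hs]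
        exact Finset.sum_congr rfl fun i _ => (sq (a i)).symm ▸ rfl
      rw [← h2, Real.sqrt_sq (norm_nonneg z)]
    have hJTz : J (T z) = ∑ i, a i • (J (T (u i))) := by
      rw [hz, map_sum, map_sum]
      simp [map_smul]
    have hfz : f (J (T z)) = s := by
      rw [hJTz, map_sum, hs]
      refine Finset.sum_congr rfl fun i _ => ?_
      rw [map_smul]
      simp [ha, smul_eq_mul, sq]
    have hb : s ≤ Real.sqrt s := by
      calc s = f (J (T z)) := hfz.symm
        _ ≤ |f (J (T z))| := le_abs_self _
        _ ≤ ‖f‖ * ‖J (T z)‖ := f.le_opNorm _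
        _ ≤ 1 * ‖z‖ := by
            apply mul_le_mul hf (hT z) (norm_nonneg _) zero_le_one
        _ = Real.sqrt s := by rw [one_mul, hzn]
    nlinarith [Real.sq_sqrt hs0, Real.sqrt_nonneg s, sq_nonneg (Real.sqrt s - 1)]

theorem rpow_le_self_aux {t p : ℝ} (h0 : 0 ≤ t) (h1 : t ≤ 1) (hp : 1 ≤ p) : t^p ≤ t := by
  rcases h0.lt_or_eq with h | h
  · calc t^p ≤ t^(1:ℝ) := Real.rpow_le_rpow_of_exponent_ge h h1 hp
      _ = t := Real.rpow_one t
  · rw [← h, Real.zero_rpow (by linarith)]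

-- given the dr vectors, block bound
theorem block_bound {p : ℝ} (hp : 1 ≤ p) (n : ℕ) (y : Fin n → E)
    (hy : ∀ i, (2/5:ℝ) ≤ ‖y i‖ ∧ ‖y i‖ ≤ 1)
    (hkey : ∀ f : E →L[ℝ] ℝ, ‖f‖ ≤ 1 → (∑ i, (f (y i))^2) ≤ 1)
    (f : E →L[ℝ] ℝ) (hf : ‖f‖ ≤ 1) :
    (∑ i, |f (y i)|^p) ≤ Real.sqrt n := by
  have habs : ∀ i, |f (y i)| ≤ 1 := by
    intro i
    calc |f (y i)| ≤ ‖f‖ * ‖y i‖ := f.le_opNorm _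
      _ ≤ 1 * 1 := mul_le_mul hf (hy i).2 (norm_nonneg _) zero_le_one
      _ = 1 := one_mul _
  have h1 : (∑ i, |f (y i)|^p) ≤ ∑ i, |f (y i)| :=
    Finset.sum_le_sum fun i _ => rpow_le_self_aux (abs_nonneg _) (habs i) hp
  have h2 : (∑ i, |f (y i)|)^2 ≤ (n:ℝ) * ∑ i, |f (y i)|^2 := by
    have := sq_sum_le_card_mul_sum_sq (s := (Finset.univ : Finset (Fin n)))
      (f := fun i => |f (y i)|)
    simpa using this
  have h3 : (∑ i, |f (y i)|^2) ≤ 1 := by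
    have : ∀ i, |f (y i)|^2 = (f (y i))^2 := fun i => sq_abs _
    simp_rw [this]
    exact hkey f hf
  have h4 : (∑ i, |f (y i)|)^2 ≤ (n:ℝ) := by
    calc (∑ i, |f (y i)|)^2 ≤ (n:ℝ) * ∑ i, |f (y i)|^2 := h2
      _ ≤ (n:ℝ) * 1 := by
          apply mul_le_mul_of_nonneg_left h3 (Nat.cast_nonneg n)
      _ = n := mul_one _
  have h5 : (∑ i, |f (y i)|) ≤ Real.sqrt n := Real.le_sqrt_of_sq_le h4
  linarith

theorem dr_exists (hE : ¬ FiniteDimensional ℝ E) (n : ℕ) :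
    ∃ y : Fin n → E, (∀ i, (2/5:ℝ) ≤ ‖y i‖ ∧ ‖y i‖ ≤ 1) ∧
      ∀ f : E →L[ℝ] ℝ, ‖f‖ ≤ 1 → (∑ i, (f (y i))^2) ≤ 1 := by
  rcases Nat.eq_zero_or_pos n with rfl | hn
  · exact ⟨Fin.elim0, fun i => i.elim0, fun f hf => by simp⟩
  · obtain ⟨v, hv⟩ : ∃ v : Fin (2*n) → E, LinearIndependent ℝ v := by
      apply exists_linearIndependent_of_le_rank
      have h0 : ¬ (Module.rank ℝ E < Cardinal.aleph0) := by
        rw [Module.rank_lt_aleph0_iff]; exact hE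
      exact le_trans (le_of_lt (Cardinal.nat_lt_aleph0 (2*n))) (not_lt.mp h0)
    obtain ⟨J, hJ⟩ := aux_exists_J (2*n) v hv
    obtain ⟨c, hc, hcJ⟩ := exists_c0 (2*n) (by omega) J hJ
    obtain ⟨T, hT, hdet, hmax⟩ := exists_max (2*n) (by omega) J c hc hcJ
    obtain ⟨u, hu, hub⟩ := greedy n hn J T hT hdet hmax n le_rfl
    exact dr_main n hn J T hT u hu hub

theorem main_statement (hE : ¬ FiniteDimensional ℝ E) (p : ℝ) (hp : 1 ≤ p) :
    ∃ x : ℕ → E, (∀ f : E →L[ℝ] ℝ, Summable fun j => |f (x j)| ^ p) ∧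
      ¬ (Summable fun j => ‖x j‖ ^ p) ∧
      ∃ u : ℕ → ℕ → E, (∀ n, Summable fun j => ‖u n j‖ ^ p) ∧
        (∀ n, ∀ f : E →L[ℝ] ℝ, Summable fun j => |f (u n j)| ^ p) ∧
        Tendsto (fun n => ⨆ f : {f : E →L[ℝ] ℝ // ‖f‖ ≤ 1},
          (∑' j, |f.1 (u n j - x j)| ^ p) ^ (1 / p)) atTop (nhds 0) := by
  have hp0 : (0:ℝ) < p := lt_of_lt_of_le one_pos hp
  have hpne : p ≠ 0 := ne_of_gt hp0
  have hip : (0:ℝ) < 1/p := by positivity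
  -- blocks
  set nm : ℕ → ℕ := fun m => 4^(m+1) with hnm_def
  have hnm : ∀ m, 0 < nm m := fun m => Nat.pow_pos (by norm_num)
  have hY := fun m => dr_exists hE (nm m)
  choose Y hY1 hY2 using hY
  set t : ℕ → ℝ := fun m => ((nm m : ℝ)) ^ (-(1/p)) with ht_def
  have hnmR : ∀ m, (0:ℝ) < (nm m : ℝ) := fun m => by exact_mod_cast hnm m
  have ht : ∀ m, 0 < t m := fun m => Real.rpow_pos_of_pos (hnmR m) _
  have htp : ∀ m, (t m)^p = ((nm m : ℝ))⁻¹ := by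
    intro m
    show (((nm m : ℝ)) ^ (-(1/p)))^p = ((nm m : ℝ))⁻¹
    rw [← Real.rpow_mul (le_of_lt (hnmR m))]
    have : (-(1/p)) * p = -1 := by field_simp
    rw [this, Real.rpow_neg_one]
  -- index type
  set I := (m : ℕ) × Fin (nm m) with hI_def
  haveI : Infinite I := Infinite.of_injective (fun m : ℕ => (⟨m, ⟨0, hnm m⟩⟩ : I))
    (fun a b h => congrArg Sigma.fst h)
  haveI : Denumerable I := Denumerable.ofEncodableOfInfinite I
  set e : ℕ ≃ I := (Denumerable.eqv I).symm with he_def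
  set X : I → E := fun w => t w.1 • Y w.1 w.2 with hX_def
  set x : ℕ → E := fun j => X (e j) with hx_def
  -- block estimate for unit functionals
  have hq2 : ∀ m : ℕ, ((nm m : ℝ)) = ((2:ℝ)^(m+1)) * ((2:ℝ)^(m+1)) := by
    intro m
    rw [hnm_def]
    push_cast
    rw [show (4:ℝ) = 2*2 by norm_num, mul_pow]
  have hsqrt : ∀ m : ℕ, Real.sqrt ((nm m : ℝ)) = (2:ℝ)^(m+1) := by
    intro m
    rw [hq2 m, Real.sqrt_mul_self (by positivity)]
  have hinv : ∀ m : ℕ, ((nm m : ℝ))⁻¹ * Real.sqrt ((nm m : ℝ)) = ((1:ℝ)/2)^(m+1) := by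
    intro m
    rw [hsqrt m, hq2 m, div_pow, one_pow, div_eq_mul_inv, one_mul]
    rw [mul_inv]
    field_simp
  have hblock : ∀ f : E →L[ℝ] ℝ, ‖f‖ ≤ 1 → ∀ m,
      (∑ i : Fin (nm m), |f (X ⟨m, i⟩)|^p) ≤ ((1:ℝ)/2)^(m+1) := by
    intro f hf m
    have h1 : ∀ i : Fin (nm m), |f (X ⟨m, i⟩)|^p = (t m)^p * |f (Y m i)|^p := by
      intro i
      have h0 : f (X ⟨m, i⟩) = t m * f (Y m i) := by
        rw [hX_def]; exact map_smul f (t m) (Y m i) ▸ rfl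
      rw [h0, abs_mul, abs_of_pos (ht m), Real.mul_rpow (le_of_lt (ht m)) (abs_nonneg _)]
    calc (∑ i : Fin (nm m), |f (X ⟨m, i⟩)|^p)
        = (t m)^p * ∑ i : Fin (nm m), |f (Y m i)|^p := by
          rw [Finset.mul_sum]; exact Finset.sum_congr rfl fun i _ => h1 i
      _ ≤ (t m)^p * Real.sqrt (nm m) := by
          apply mul_le_mul_of_nonneg_left
            (block_bound hp (nm m) (Y m) (hY1 m) (hY2 m) f hf)
            (le_of_lt (Real.rpow_pos_of_pos (ht m) p))
      _ = ((nm m : ℝ))⁻¹ * Real.sqrt (nm m) := by rw [htp m]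
      _ = ((1:ℝ)/2)^(m+1) := hinv m
  -- block lower bound for norms
  have hblockl : ∀ m, (2/5:ℝ)^p ≤ ∑ i : Fin (nm m), ‖X ⟨m, i⟩‖^p := by
    intro m
    have h1 : ∀ i : Fin (nm m), (t m)^p * (2/5:ℝ)^p ≤ ‖X ⟨m, i⟩‖^p := by
      intro i
      have h0 : ‖X ⟨m, i⟩‖ = t m * ‖Y m i‖ := by
        rw [hX_def]
        simp only [norm_smul, Real.norm_eq_abs, abs_of_pos (ht m)]
      rw [h0, Real.mul_rpow (le_of_lt (ht m)) (norm_nonneg _)]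
      apply mul_le_mul_of_nonneg_left
        (Real.rpow_le_rpow (by norm_num) (hY1 m i).1 (le_of_lt hp0))
        (le_of_lt (Real.rpow_pos_of_pos (ht m) p))
    calc (2/5:ℝ)^p = (nm m : ℝ) * ((t m)^p * (2/5:ℝ)^p) := by
          rw [htp m]
          field_simp
          exact (div_self (hnmR m).ne').symm
      _ = ∑ _i : Fin (nm m), (t m)^p * (2/5:ℝ)^p := by
          rw [Finset.sum_const, Finset.card_univ, Fintype.card_fin, nsmul_eq_mul]
      _ ≤ ∑ i : Fin (nm m), ‖X ⟨m, i⟩‖^p := Finset.sum_le_sum fun i _ => h1 i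
  -- general f block bound
  have hblockf : ∀ f : E →L[ℝ] ℝ, ∀ m,
      (∑ i : Fin (nm m), |f (X ⟨m, i⟩)|^p) ≤ (max ‖f‖ 1)^p * ((1:ℝ)/2)^(m+1) := by
    intro f m
    set c := max ‖f‖ 1 with hc
    have hc1 : (0:ℝ) < c := lt_of_lt_of_le one_pos (le_max_right _ _)
    set g := c⁻¹ • f with hg
    have hgn : ‖g‖ ≤ 1 := by
      apply ContinuousLinearMap.opNorm_le_bound _ zero_le_one
      intro v
      have h0 : g v = c⁻¹ * f v := by
        rw [hg]
        simp only [ContinuousLinearMap.coe_smul', Pi.smul_apply, smul_eq_mul]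
      rw [h0, one_mul, Real.norm_eq_abs, abs_mul, abs_of_pos (by positivity : (0:ℝ) < c⁻¹)]
      calc c⁻¹ * |f v| ≤ c⁻¹ * (‖f‖ * ‖v‖) := by
            apply mul_le_mul_of_nonneg_left (f.le_opNorm v) (by positivity)
        _ ≤ c⁻¹ * (c * ‖v‖) := by
            apply mul_le_mul_of_nonneg_left
              (mul_le_mul_of_nonneg_right (le_max_left _ _) (norm_nonneg v)) (by positivity)
        _ = ‖v‖ := by field_simp
    have happ : ∀ v : E, |f v|^p = c^p * |g v|^p := by
      intro v
      have h0 : f v = c * g v := by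
        rw [hg]
        simp only [ContinuousLinearMap.coe_smul', Pi.smul_apply, smul_eq_mul]
        field_simp
      rw [h0, abs_mul, abs_of_pos hc1, Real.mul_rpow (le_of_lt hc1) (abs_nonneg _)]
    calc (∑ i : Fin (nm m), |f (X ⟨m, i⟩)|^p)
        = c^p * ∑ i : Fin (nm m), |g (X ⟨m, i⟩)|^p := by
          rw [Finset.mul_sum]; exact Finset.sum_congr rfl fun i _ => happ _
      _ ≤ c^p * ((1:ℝ)/2)^(m+1) :=
          mul_le_mul_of_nonneg_left (hblock g hgn m)
            (le_of_lt (Real.rpow_pos_of_pos hc1 p))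
  -- geometric comparison
  have hgeo : ∀ C : ℝ, Summable (fun m : ℕ => C * ((1:ℝ)/2)^(m+1)) := by
    intro C
    have h0 : Summable (fun m : ℕ => ((1:ℝ)/2)^m) :=
      summable_geometric_of_lt_one (by norm_num) (by norm_num)
    have h1 := (h0.mul_left (C * (1/2)))
    apply h1.congr
    intro m
    rw [pow_succ]
    ring
  -- summability over I
  have hnneg : ∀ (f : E →L[ℝ] ℝ) (w : I), 0 ≤ |f (X w)|^p :=
    fun f w => Real.rpow_nonneg (abs_nonneg _) p
  have hsumI : ∀ f : E →L[ℝ] ℝ, Summable (fun w : I => |f (X w)|^p) := by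
    intro f
    apply (summable_sigma_of_nonneg (hnneg f)).mpr
    refine ⟨fun m => Summable.of_finite, ?_⟩
    apply Summable.of_nonneg_of_le
      (fun m => tsum_nonneg (fun i => hnneg f ⟨m, i⟩))
      (fun m => ?_) (hgeo ((max ‖f‖ 1)^p))
    rw [tsum_fintype]
    exact hblockf f m
  have hWS : ∀ f : E →L[ℝ] ℝ, Summable fun j => |f (x j)|^p := by
    intro f
    exact (Equiv.summable_iff e (f := fun w : I => |f (X w)|^p)).mpr (hsumI f)
  -- not MemLp
  have hnotMem : ¬ (Summable fun j => ‖x j‖ ^ p) := by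
    intro hcon
    have hXsum : Summable (fun w : I => ‖X w‖^p) :=
      (Equiv.summable_iff e (f := fun w : I => ‖X w‖^p)).mp hcon
    have h2 := ((summable_sigma_of_nonneg
      (fun w => Real.rpow_nonneg (norm_nonneg _) p)).mp hXsum).2
    have h3 := h2.tendsto_atTop_zero
    have hq : (0:ℝ) < (2/5:ℝ)^p := Real.rpow_pos_of_pos (by norm_num) p
    have h4 := h3.eventually_lt_const hq
    obtain ⟨m, hm⟩ := h4.exists
    rw [tsum_fintype] at hm
    exact absurd (hblockl m) (not_le.mpr hm)
  -- the truncations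
  set u : ℕ → ℕ → E := fun n j => if (e j).1 < n then x j else 0 with hu_def
  have hfinI : ∀ n : ℕ, Set.Finite {w : I | w.1 < n} := by
    intro n
    apply Set.Finite.subset (Set.Finite.biUnion (Finset.range n).finite_toSet
      (fun m _ => Set.Finite.image (Sigma.mk m) (Set.finite_univ (α := Fin (nm m)))))
    rintro ⟨m, i⟩ hm
    have hm' : m < n := hm
    exact Set.mem_biUnion (by simpa using hm') ⟨i, Set.mem_univ i, rfl⟩
  have hfin : ∀ n : ℕ, Set.Finite {j : ℕ | (e j).1 < n} := by
    intro n
    have : {j : ℕ | (e j).1 < n} = ⇑e ⁻¹' {w : I | w.1 < n} := rfl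
    rw [this]
    exact Set.Finite.preimage e.injective.injOn (hfinI n)
  have hMemu : ∀ n, Summable fun j => ‖u n j‖ ^ p := by
    intro n
    apply summable_of_ne_finset_zero (s := (hfin n).toFinset)
    intro j hj
    have : ¬ ((e j).1 < n) := by simpa using hj
    simp only [hu_def, if_neg this, norm_zero]
    exact Real.zero_rpow hpne
  have hWSu : ∀ n, ∀ f : E →L[ℝ] ℝ, Summable fun j => |f (u n j)| ^ p := by
    intro n f
    apply summable_of_ne_finset_zero (s := (hfin n).toFinset)
    intro j hj
    have : ¬ ((e j).1 < n) := by simpa using hj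
    simp only [hu_def, if_neg this, map_zero, abs_zero]
    exact Real.zero_rpow hpne
  -- tail estimate
  have htail : ∀ (f : E →L[ℝ] ℝ), ‖f‖ ≤ 1 → ∀ n,
      (∑' j, |f (u n j - x j)|^p) ≤ ((1:ℝ)/2)^n := by
    intro f hf n
    classical
    set F : I → ℝ := fun w => if w.1 < n then 0 else |f (X w)|^p with hF_def
    have hF0 : ∀ w, 0 ≤ F w := by
      intro w
      by_cases h : w.1 < n
      · simp only [hF_def, if_pos h]; exact le_refl 0
      · simp only [hF_def, if_neg h]; exact hnneg f w
    have hFle : ∀ w, F w ≤ |f (X w)|^p := by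
      intro w
      by_cases h : w.1 < n
      · simp only [hF_def, if_pos h]; exact hnneg f w
      · simp only [hF_def, if_neg h]; exact le_refl _
    have hFsum : Summable F := Summable.of_nonneg_of_le hF0 hFle (hsumI f)
    have hstep : (fun j : ℕ => |f (u n j - x j)|^p) = fun j => F (e j) := by
      funext j
      by_cases h : (e j).1 < n
      · simp only [hu_def, hF_def, if_pos h, hx_def]
        rw [sub_self, map_zero, abs_zero, Real.zero_rpow hpne]
      · simp only [hu_def, hF_def, if_neg h, hx_def]
        rw [zero_sub, map_neg, abs_neg]
    rw [hstep, Equiv.tsum_eq e F]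
    set gn : ℕ → ℝ := fun m => if m < n then 0 else ((1:ℝ)/2)^(m+1) with hgn_def
    have hgn0 : ∀ m, 0 ≤ gn m := by
      intro m
      by_cases h : m < n
      · simp only [hgn_def, if_pos h]; exact le_refl 0
      · simp only [hgn_def, if_neg h]; positivity
    have hgnle : ∀ m, gn m ≤ 1 * ((1:ℝ)/2)^(m+1) := by
      intro m
      rw [one_mul]
      by_cases h : m < n
      · simp only [hgn_def, if_pos h]; positivity
      · simp only [hgn_def, if_neg h]; exact le_refl _
    have hgnsum : Summable gn := Summable.of_nonneg_of_le hgn0 hgnle (hgeo 1)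
    have hfibers := (summable_sigma_of_nonneg hF0).mp hFsum
    rw [Summable.tsum_sigma hFsum]
    have hfible : ∀ m, (∑' i : Fin (nm m), F ⟨m, i⟩) ≤ gn m := by
      intro m
      rw [tsum_fintype]
      by_cases h : m < n
      · simp only [hgn_def, if_pos h]
        apply le_of_eq
        apply Finset.sum_eq_zero
        intro i _
        simp only [hF_def, if_pos h]
      · simp only [hgn_def, if_neg h]
        have : ∀ i : Fin (nm m), F ⟨m, i⟩ = |f (X ⟨m, i⟩)|^p := by
          intro i; simp only [hF_def, if_neg h]
        calc (∑ i : Fin (nm m), F ⟨m, i⟩) = ∑ i : Fin (nm m), |f (X ⟨m, i⟩)|^p :=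
              Finset.sum_congr rfl fun i _ => this i
          _ ≤ ((1:ℝ)/2)^(m+1) := hblock f hf m
    have h5 : (∑' m, ∑' i : Fin (nm m), F ⟨m, i⟩) ≤ ∑' m, gn m :=
      Summable.tsum_le_tsum hfible hfibers.2 hgnsum
    have h6 : (∑' m, gn m) = ((1:ℝ)/2)^n := by
      have h7 := Summable.sum_add_tsum_nat_add (f := gn) n hgnsum
      have h8 : (∑ m ∈ Finset.range n, gn m) = 0 := by
        apply Finset.sum_eq_zero
        intro m hm
        simp only [hgn_def, if_pos (Finset.mem_range.mp hm)]
      have h9 : ∀ k : ℕ, gn (k + n) = ((1:ℝ)/2)^(n+1) * ((1:ℝ)/2)^k := by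
        intro k
        simp only [hgn_def, if_neg (by omega : ¬ (k + n < n))]
        rw [← pow_add]
        congr 1
        omega
      have h10 : (∑' k, gn (k + n)) = ((1:ℝ)/2)^(n+1) * 2 := by
        rw [tsum_congr h9, tsum_mul_left, tsum_geometric_of_lt_one (by norm_num) (by norm_num)]
        norm_num
      rw [← h7, h8, zero_add, h10, pow_succ]
      ring
    rw [← h6]
    exact h5
  -- the supremum tends to zero
  refine ⟨x, hWS, hnotMem, u, hMemu, hWSu, ?_⟩
  set ρ : ℝ := ((1:ℝ)/2) ^ ((1:ℝ)/p) with hρ_def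
  have hρ0 : 0 ≤ ρ := Real.rpow_nonneg (by norm_num) _
  have hρ1 : ρ < 1 := Real.rpow_lt_one (by norm_num) (by norm_num) hip
  have hconv : ∀ n : ℕ, (((1:ℝ)/2)^n) ^ ((1:ℝ)/p) = ρ^n := by
    intro n
    rw [← Real.rpow_natCast ((1:ℝ)/2) n, ← Real.rpow_mul (by norm_num), mul_comm,
      Real.rpow_mul (by norm_num), Real.rpow_natCast]
  apply squeeze_zero (g := fun n => ρ^n)
  · intro n
    apply Real.iSup_nonneg
    intro f
    exact Real.rpow_nonneg (tsum_nonneg fun j => Real.rpow_nonneg (abs_nonneg _) p) _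
  · intro n
    apply Real.iSup_le
    · intro f
      calc (∑' j, |f.1 (u n j - x j)| ^ p) ^ ((1:ℝ)/p)
          ≤ (((1:ℝ)/2)^n) ^ ((1:ℝ)/p) := by
            apply Real.rpow_le_rpow
              (tsum_nonneg fun j => Real.rpow_nonneg (abs_nonneg _) p)
              (htail f.1 f.2 n) (le_of_lt hip)
        _ = ρ^n := hconv n
    · positivity
  · exact tendsto_pow_atTop_nhds_zero_of_lt_one hρ0 hρ1

end Aux

/-- if `E` is infinite dimensional then `ℓ_p(E)` is not closed in `ℓ_p^w(E)`
with respect to the weak `ℓ_p` norm: there is a weakly `p`-summable sequence which is not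
absolutely `p`-summable but is the weak-norm limit of absolutely `p`-summable sequences. -/
theorem stmt_1 {E : Type*} [NormedAddCommGroup E] [NormedSpace ℝ E] [CompleteSpace E]
    (hE : ¬ FiniteDimensional ℝ E) (p : ℝ) (hp : 1 ≤ p) :
    ∃ x : ℕ → E, WSummable p x ∧ ¬ MemLpSeq p x ∧
      ∃ u : ℕ → ℕ → E, (∀ n, MemLpSeq p (u n)) ∧ (∀ n, WSummable p (u n)) ∧
        Tendsto (fun n => wNorm p fun j => u n j - x j) atTop (nhds 0) := by
  obtain ⟨x, h1, h2, u, h3, h4, h5⟩ := main_statement hE p hp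
  exact ⟨x, h1, h2, u, h3, h4, h5⟩
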